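/- The function z ↦ 1/(|z|² (-log|z|²)^{3/2}) is not square-integrable with respect to Lebesgue measure on any punctured disc {0 < |z| < r} with 0 < r < 1. -/

import Mathlib

open MeasureTheory

/-- Core real estimate: `(t * (-log t)^{3/2})² ≤ 216 * t` for `0 < t < 1`. -/
lemma core_est (t : ℝ) (ht : 0 < t) (ht1 : t < 1) :
    (t * (-Real.log t) ^ ((3 : ℝ) / 2)) ^ 2 ≤ 216 * t := by
  set u : ℝ := t ^ ((1 : ℝ) / 6) with hu
  have hu0 : 0 < u := Real.rpow_pos_of_pos ht _
  have hu1 : u < 1 := by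
    have := Real.rpow_lt_one ht.le ht1 (by norm_num : (0:ℝ) < 1/6)
    simpa [hu] using this
  have htu : t = u ^ 6 := by
    rw [hu, ← Real.rpow_natCast (t ^ ((1:ℝ)/6)) 6, ← Real.rpow_mul ht.le]
    norm_num
  have hL0 : 0 < -Real.log t := by
    have := Real.log_neg ht ht1
    linarith
  -- L ≤ 6 / u
  have hlog : -Real.log t ≤ 6 * u⁻¹ := by
    have h1 : Real.log u = (1 / 6 : ℝ) * Real.log t := Real.log_rpow ht _
    have h2 : Real.log u⁻¹ ≤ u⁻¹ - 1 :=
      Real.log_le_sub_one_of_pos (inv_pos.2 hu0)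
    have h3 : Real.log u⁻¹ = -Real.log u := Real.log_inv u
    have : -Real.log t = 6 * Real.log u⁻¹ := by
      rw [h3, h1]; ring
    rw [this]
    have : Real.log u⁻¹ ≤ u⁻¹ := by
      have : (0:ℝ) ≤ 1 := zero_le_one
      linarith
    linarith
  -- (L^{3/2})² = L³
  have hsq : ((-Real.log t) ^ ((3 : ℝ) / 2)) ^ 2 = (-Real.log t) ^ (3 : ℕ) := by
    rw [← Real.rpow_natCast ((-Real.log t) ^ ((3:ℝ)/2)) 2, ← Real.rpow_mul hL0.le,
      ← Real.rpow_natCast (-Real.log t) 3]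
    norm_num
  have hLcube : (-Real.log t) ^ (3 : ℕ) ≤ (6 * u⁻¹) ^ (3 : ℕ) := by
    exact pow_le_pow_left₀ hL0.le hlog 3
  have hui : u⁻¹ = u ^ 5 / u ^ 6 := by
    field_simp
  have expand : (t * (-Real.log t) ^ ((3 : ℝ) / 2)) ^ 2
      = t ^ 2 * ((-Real.log t) ^ ((3 : ℝ) / 2)) ^ 2 := by ring
  rw [expand, hsq]
  have : t ^ 2 * (-Real.log t) ^ (3 : ℕ) ≤ t ^ 2 * (6 * u⁻¹) ^ (3 : ℕ) := by
    have ht2 : (0:ℝ) ≤ t ^ 2 := sq_nonneg t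
    exact mul_le_mul_of_nonneg_left hLcube ht2
  refine this.trans ?_
  -- t² (6/u)³ = 216 u⁹ ≤ 216 u⁶ = 216 t
  have h9 : u ^ 9 ≤ u ^ 6 := pow_le_pow_of_le_one hu0.le hu1.le (by norm_num)
  have : t ^ 2 * (6 * u⁻¹) ^ (3 : ℕ) = 216 * u ^ 9 := by
    rw [htu]
    field_simp
    ring
  rw [this, htu]
  nlinarith [h9]

/-- Pointwise lower bound on the annulus. -/
lemma pt_bound (s : ℝ) (hs : 0 < s) (hs1 : s ≤ 1) (z : ℂ)
    (hz1 : s / 2 ≤ ‖z‖) (hz2 : ‖z‖ < s) :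
    s⁻¹ ^ 2 / 216 ≤
      ((‖z‖ ^ 2 * (-Real.log (‖z‖ ^ 2)) ^ ((3 : ℝ) / 2))⁻¹) ^ 2 := by
  set t : ℝ := ‖z‖ ^ 2 with htdef
  have hz0 : 0 < ‖z‖ := lt_of_lt_of_le (by positivity) hz1
  have ht : 0 < t := by positivity
  have hts : t < s ^ 2 := by
    have := mul_self_lt_mul_self hz0.le hz2
    simpa [htdef, pow_two] using this
  have ht1 : t < 1 := lt_of_lt_of_le hts (by nlinarith)
  have hcore := core_est t ht ht1
  have hL0 : 0 < -Real.log t := by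
    have := Real.log_neg ht ht1
    linarith
  have hpos : 0 < t * (-Real.log t) ^ ((3 : ℝ) / 2) := by
    have := Real.rpow_pos_of_pos hL0 ((3:ℝ)/2)
    positivity
  have key : ((t * (-Real.log t) ^ ((3 : ℝ) / 2))⁻¹) ^ 2
      = ((t * (-Real.log t) ^ ((3 : ℝ) / 2)) ^ 2)⁻¹ := by
    rw [inv_pow]
  rw [key]
  have h216 : (0:ℝ) < 216 * t := by positivity
  have hstep : (216 * (s ^ 2))⁻¹ ≤ ((t * (-Real.log t) ^ ((3 : ℝ) / 2)) ^ 2)⁻¹ := by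
    apply inv_anti₀
    · positivity
    · nlinarith
  refine le_trans (le_of_eq ?_) hstep
  field_simp

/-- Lower bound for the lintegral over an annulus. -/
lemma ann_bound (s : ℝ) (hs : 0 < s) (hs1 : s ≤ 1) :
    ENNReal.ofReal (Real.pi / 288) ≤
      ∫⁻ z in Metric.ball (0:ℂ) s \ Metric.ball 0 (s / 2),
        ENNReal.ofReal
          (((‖z‖ ^ 2 * (-Real.log (‖z‖ ^ 2)) ^ ((3 : ℝ) / 2))⁻¹) ^ 2) := by
  set B : Set ℂ := Metric.ball (0:ℂ) s \ Metric.ball 0 (s / 2) with hB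
  have hmeas : MeasurableSet B := measurableSet_ball.diff measurableSet_ball
  have hpt : ∀ z ∈ B, ENNReal.ofReal (s⁻¹ ^ 2 / 216) ≤
      ENNReal.ofReal
        (((‖z‖ ^ 2 * (-Real.log (‖z‖ ^ 2)) ^ ((3 : ℝ) / 2))⁻¹) ^ 2) := by
    rintro z ⟨hz1, hz2⟩
    apply ENNReal.ofReal_le_ofReal
    apply pt_bound s hs hs1
    · have : ¬ ‖z‖ < s / 2 := by
        simpa [Metric.mem_ball, Complex.dist_eq] using hz2
      linarith
    · simpa [Metric.mem_ball, Complex.dist_eq] using hz1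
  have h1 : ENNReal.ofReal (s⁻¹ ^ 2 / 216) * volume B ≤
      ∫⁻ z in B, ENNReal.ofReal
        (((‖z‖ ^ 2 * (-Real.log (‖z‖ ^ 2)) ^ ((3 : ℝ) / 2))⁻¹) ^ 2) := by
    rw [← setLIntegral_const B (ENNReal.ofReal (s⁻¹ ^ 2 / 216))]
    exact setLIntegral_mono' hmeas hpt
  refine le_trans ?_ h1
  -- compute volume of B
  have hsub : Metric.ball (0:ℂ) (s / 2) ⊆ Metric.ball 0 s :=
    Metric.ball_subset_ball (by linarith)
  have hvol : volume B = ENNReal.ofReal (s ^ 2 * Real.pi) -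
      ENNReal.ofReal ((s / 2) ^ 2 * Real.pi) := by
    rw [hB, measure_diff hsub measurableSet_ball.nullMeasurableSet
        measure_ball_lt_top.ne, Complex.volume_ball, Complex.volume_ball]
    have hpi : (NNReal.pi : ENNReal) = ENNReal.ofReal Real.pi := by
      rw [← NNReal.coe_real_pi, ENNReal.ofReal_coe_nnreal]
    congr 1 <;>
    · rw [hpi, ← ENNReal.ofReal_pow (by positivity), ← ENNReal.ofReal_mul (by positivity)]
  have hsubeq : ENNReal.ofReal (s ^ 2 * Real.pi) - ENNReal.ofReal ((s / 2) ^ 2 * Real.pi)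
      = ENNReal.ofReal (s ^ 2 * Real.pi - (s / 2) ^ 2 * Real.pi) :=
    (ENNReal.ofReal_sub _ (by positivity)).symm
  rw [hvol, hsubeq, ← ENNReal.ofReal_mul (by positivity)]
  apply ENNReal.ofReal_le_ofReal
  have : s⁻¹ ^ 2 / 216 * (s ^ 2 * Real.pi - (s / 2) ^ 2 * Real.pi) = Real.pi / 288 := by
    field_simp
    ring
  rw [this]

/-- The function `z ↦ 1/(|z|² (-log|z|²)^{3/2})` is not square-integrable (with respect
to Lebesgue measure on `ℂ`) on any punctured disc `{0 < |z| < r}` with `0 < r < 1`. -/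
theorem stmt_3 :
    ∀ r : ℝ, 0 < r → r < 1 →
      ¬ IntegrableOn
          (fun z : ℂ =>
            ((‖z‖ ^ 2 * (-Real.log (‖z‖ ^ 2)) ^ ((3 : ℝ) / 2))⁻¹) ^ 2)
          {z : ℂ | 0 < ‖z‖ ∧ ‖z‖ < r} volume := by
  intro r hr hr1 h
  set f : ℂ → ℝ := fun z =>
    ((‖z‖ ^ 2 * (-Real.log (‖z‖ ^ 2)) ^ ((3 : ℝ) / 2))⁻¹) ^ 2 with hf
  set D : Set ℂ := {z : ℂ | 0 < ‖z‖ ∧ ‖z‖ < r} with hD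
  set A : ℕ → Set ℂ := fun k =>
    Metric.ball (0:ℂ) (r / 2 ^ k) \ Metric.ball 0 (r / 2 ^ k / 2) with hA
  have hAm : ∀ k, MeasurableSet (A k) := fun k =>
    measurableSet_ball.diff measurableSet_ball
  have hhalf : ∀ k : ℕ, r / 2 ^ k / 2 = r / 2 ^ (k + 1) := by
    intro k; rw [pow_succ]; ring
  have hd : ∀ j k : ℕ, j < k → Disjoint (A j) (A k) := by
    intro j k hjk
    rw [Set.disjoint_left]
    rintro z ⟨_, hz2⟩ ⟨hz3, _⟩
    apply hz2
    apply Metric.ball_subset_ball _ hz3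
    rw [hhalf]
    apply div_le_div_of_nonneg_left hr.le (by positivity)
    exact pow_le_pow_right₀ one_le_two hjk
  have hdisj : Pairwise (Function.onFun Disjoint A) := by
    intro j k hjk
    rcases hjk.lt_or_gt with h' | h'
    · exact hd j k h'
    · exact (hd k j h').symm
  have hsub : (⋃ k, A k) ⊆ D := by
    rintro z ⟨_, ⟨k, rfl⟩, hz⟩
    obtain ⟨hz1, hz2⟩ := hz
    constructor
    · have : ¬ ‖z‖ < r / 2 ^ k / 2 := by
        simpa [Metric.mem_ball, Complex.dist_eq] using hz2
      have hpos : (0:ℝ) < r / 2 ^ k / 2 := by positivity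
      linarith
    · have h1 : ‖z‖ < r / 2 ^ k := by
        simpa [Metric.mem_ball, Complex.dist_eq] using hz1
      have h2 : r / 2 ^ k ≤ r := by
        apply div_le_self hr.le
        exact one_le_pow₀ one_le_two
      linarith
  have hkey : ∀ k : ℕ, ENNReal.ofReal (Real.pi / 288) ≤
      ∫⁻ z in A k, ENNReal.ofReal (f z) := by
    intro k
    have hs : 0 < r / 2 ^ k := by positivity
    have hs1 : r / 2 ^ k ≤ 1 := by
      have : r / 2 ^ k ≤ r := by
        apply div_le_self hr.le
        exact one_le_pow₀ one_le_two
      linarith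
    exact ann_bound (r / 2 ^ k) hs hs1
  have hfin := h.2
  rw [hasFiniteIntegral_def] at hfin
  have hchain : (⊤ : ENNReal) ≤ ∫⁻ z in D, ‖f z‖ₑ ∂volume := by
    calc (⊤ : ENNReal) = ∑' _ : ℕ, ENNReal.ofReal (Real.pi / 288) := by
          rw [ENNReal.tsum_const_eq_top_of_ne_zero]
          simp [Real.pi_pos, ne_of_gt, ENNReal.ofReal_pos.2 (by positivity : (0:ℝ) < Real.pi / 288)]
      _ ≤ ∑' k : ℕ, ∫⁻ z in A k, ENNReal.ofReal (f z) := ENNReal.tsum_le_tsum hkey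
      _ = ∫⁻ z in ⋃ k, A k, ENNReal.ofReal (f z) := (lintegral_iUnion hAm hdisj _).symm
      _ ≤ ∫⁻ z in D, ENNReal.ofReal (f z) :=
          lintegral_mono' (Measure.restrict_mono hsub le_rfl) le_rfl
      _ ≤ ∫⁻ z in D, ‖f z‖ₑ ∂volume :=
          lintegral_mono fun z => Real.ofReal_le_enorm (f z)
  rw [top_le_iff] at hchain
  rw [hchain] at hfin
  exact lt_irrefl _ hfin
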